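/- Let X and Y be compact Hausdorff spaces. Let Lsc_b(X, Lsc_b(Y)^{++}) be the partially ordered abelian semigroup (pointwise order and addition) of maps f : X → Lsc_b(Y)^{++} such that {x ∈ X : g ≪ f(x)} is open for every g ∈ Lsc_b(Y)^{++} and sup_{x∈X, y∈Y} f(x)(y) < ∞. Let G_b(X,Y) = {F : X × Y → ℝ : F = G − H with G, H bounded strictly positive lower semicontinuous functions on X × Y}, a partially ordered abelian group under pointwise order. Then the map β from the Grothendieck group G(Lsc_b(X, Lsc_b(Y)^{++})) to G_b(X,Y) defined by β([f] − [g]) = f̃ − g̃, where f̃(x,y) = f(x)(y), is a well-defined injective group homomorphism which is an order-embedding (β(s) ≤ β(t) if and only if s ≤ t). -/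

import Mathlib

noncomputable section

set_option maxHeartbeats 1000000

/-- `a` is compactly contained in `b`: for every increasing sequence having a supremum
which dominates `b`, some term already dominates `a`. -/
def CompactlyContained {M : Type*} [Preorder M] (a b : M) : Prop :=
  ∀ c : ℕ → M, Monotone c → ∀ s : M, IsLUB (Set.range c) s → b ≤ s → ∃ n, a ≤ c n

/-- The Riesz interpolation property. -/
def RieszInterpolation (M : Type*) [Preorder M] : Prop :=
  ∀ a₁ a₂ b₁ b₂ : M, a₁ ≤ b₁ → a₁ ≤ b₂ → a₂ ≤ b₁ → a₂ ≤ b₂ →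
    ∃ c : M, a₁ ≤ c ∧ a₂ ≤ c ∧ c ≤ b₁ ∧ c ≤ b₂

/-- The partially ordered abelian semigroup `Lsc_b(Y)^{++}` of bounded, strictly
positive, lower semicontinuous real functions on `Y`, with pointwise order. -/
def Lscb (Y : Type*) [TopologicalSpace Y] : Type _ :=
  {g : Y → ℝ // LowerSemicontinuous g ∧ (∀ y, 0 < g y) ∧ ∃ C : ℝ, ∀ y, g y ≤ C}

instance (Y : Type*) [TopologicalSpace Y] : PartialOrder (Lscb Y) :=
  Subtype.partialOrder _

instance (Y : Type*) [TopologicalSpace Y] : Add (Lscb Y) where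
  add g h :=
    ⟨fun y => g.1 y + h.1 y, g.2.1.add h.2.1,
      fun y => add_pos (g.2.2.1 y) (h.2.2.1 y),
      g.2.2.2.elim fun C hC => h.2.2.2.elim fun D hD =>
        ⟨C + D, fun y => add_le_add (hC y) (hD y)⟩⟩

variable {X Y : Type*} [TopologicalSpace X] [TopologicalSpace Y]

/-- Membership in the semigroup `Lsc_b(X, Lsc_b(Y)^{++})`: lower semicontinuity as a
map into `Lsc_b(Y)^{++}` together with a uniform bound. -/
def MemLscbXY (f : X → Lscb Y) : Prop :=
  (∀ g : Lscb Y, IsOpen {x : X | CompactlyContained g (f x)}) ∧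
    ∃ C : ℝ, ∀ (x : X) (y : Y), (f x).1 y ≤ C

/-- The Grothendieck relation: `(f, g)` and `(f', g')` represent the same formal
difference iff `f + g' + e = f' + g + e` for some `e` in the semigroup. -/
def GrotRel (f g f' g' : X → Lscb Y) : Prop :=
  ∃ e : X → Lscb Y, MemLscbXY e ∧ f + g' + e = f' + g + e

/-- The map `β` on representatives: `β(f, g) = f̃ - g̃`. -/
def betaMap (f g : X → Lscb Y) : X × Y → ℝ :=
  fun p => (f p.1).1 p.2 - (g p.1).1 p.2

/-- Membership in `G_b(X, Y)`: differences of bounded strictly positive lower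
semicontinuous functions on `X × Y`. -/
def MemGb (F : X × Y → ℝ) : Prop :=
  ∃ G H : X × Y → ℝ,
    (LowerSemicontinuous G ∧ (∀ p, 0 < G p) ∧ ∃ C : ℝ, ∀ p, G p ≤ C) ∧
    (LowerSemicontinuous H ∧ (∀ p, 0 < H p) ∧ ∃ C : ℝ, ∀ p, H p ≤ C) ∧
    F = G - H

section Aux

variable {Y : Type*} [TopologicalSpace Y]

lemma Lscb.le_def {a b : Lscb Y} : a ≤ b ↔ ∀ y, a.1 y ≤ b.1 y := Iff.rfl

lemma Lscb.add_val (a b : Lscb Y) (y : Y) : (a + b).1 y = a.1 y + b.1 y := rfl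

lemma cc_le {a b : Lscb Y} (h : CompactlyContained a b) : a ≤ b := by
  obtain ⟨n, hn⟩ := h (fun _ => b) monotone_const b (by rw [Set.range_const]; exact isLUB_singleton) le_rfl
  exact hn

/-- Positive LSC function on a compact space has a positive lower bound. -/
lemma lscb_pos_lb [CompactSpace Y] (h : Lscb Y) : ∃ m : ℝ, 0 < m ∧ ∀ y, m ≤ h.1 y := by
  rcases isEmpty_or_nonempty Y with hY | hY
  · exact ⟨1, one_pos, fun y => (IsEmpty.false y).elim⟩
  · -- cover Y by the open sets {h > 1/(n+1)}
    have hcov : (Set.univ : Set Y) ⊆ ⋃ n : ℕ, h.1 ⁻¹' Set.Ioi (1 / (n + 1) : ℝ) := by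
      intro y _
      obtain ⟨n, hn⟩ := exists_nat_one_div_lt (h.2.2.1 y)
      exact Set.mem_iUnion.2 ⟨n, hn⟩
    obtain ⟨t, ht⟩ := isCompact_univ.elim_finite_subcover _
      (fun n : ℕ => h.2.1.isOpen_preimage _) hcov
    set N := t.sup id with hN
    refine ⟨1 / (N + 1), by positivity, fun y => ?_⟩
    obtain ⟨n, hnt, hy⟩ := Set.mem_iUnion₂.1 (ht (Set.mem_univ y))
    have h1 : (1 / (N + 1) : ℝ) ≤ 1 / (n + 1) := by
      apply one_div_le_one_div_of_le (by positivity)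
      have : n ≤ N := Finset.le_sup (f := id) hnt
      exact_mod_cast Nat.succ_le_succ this
    exact h1.trans (le_of_lt hy)

/-- A continuous element uniformly below `h` is compactly contained in `h`. -/
lemma cc_of_gap [CompactSpace Y] {g h : Lscb Y} (hg : Continuous g.1)
    {ε : ℝ} (hε : 0 < ε) (hgap : ∀ y, g.1 y + ε ≤ h.1 y) :
    CompactlyContained g h := by
  intro c hc s hs hle
  have hub : ∀ n, c n ≤ s := fun n => hs.1 ⟨n, rfl⟩
  obtain ⟨C, hC⟩ := s.2.2.2
  have hbdd : ∀ y : Y, BddAbove (Set.range fun n => (c n).1 y) := fun y =>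
    ⟨C, by rintro _ ⟨n, rfl⟩; exact (hub n y).trans (hC y)⟩
  set S : Y → ℝ := fun y => ⨆ n, (c n).1 y with hS
  have hSlsc : LowerSemicontinuous S := by
    intro y t ht
    obtain ⟨n, hn⟩ := exists_lt_of_lt_ciSup ht
    filter_upwards [(c n).2.1 y t hn] with z hz
    exact hz.trans_le (le_ciSup (hbdd z) n)
  set Sel : Lscb Y := ⟨S, hSlsc,
    fun y => lt_of_lt_of_le ((c 0).2.2.1 y) (le_ciSup (hbdd y) 0),
    ⟨C, fun y => ciSup_le fun n => (hub n y).trans (hC y)⟩⟩ with hSel'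
  have hsle : s ≤ Sel := hs.2 (by rintro _ ⟨n, rfl⟩; exact fun y => le_ciSup (hbdd y) n)
  have hcover : (Set.univ : Set Y) ⊆ ⋃ n : ℕ, {y | g.1 y < (c n).1 y} := by
    intro y _
    have h1 : g.1 y < S y :=
      lt_of_lt_of_le (lt_of_lt_of_le (lt_add_of_pos_right _ hε) (hgap y))
        ((hle y).trans (hsle y))
    obtain ⟨n, hn⟩ := exists_lt_of_lt_ciSup h1
    exact Set.mem_iUnion.2 ⟨n, hn⟩
  have hopen : ∀ n : ℕ, IsOpen {y | g.1 y < (c n).1 y} := by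
    intro n
    have hlsc : LowerSemicontinuous fun y => (c n).1 y + (- g.1 y) :=
      (c n).2.1.add (hg.neg.lowerSemicontinuous)
    have : {y | g.1 y < (c n).1 y} = (fun y => (c n).1 y + (- g.1 y)) ⁻¹' Set.Ioi 0 := by
      ext y; simp [Set.mem_preimage, sub_pos, lt_add_neg_iff_add_lt]
    rw [this]
    exact hlsc.isOpen_preimage 0
  obtain ⟨t, ht⟩ := isCompact_univ.elim_finite_subcover _ hopen hcover
  refine ⟨t.sup id, fun y => ?_⟩
  obtain ⟨n, hnt, hy⟩ := Set.mem_iUnion₂.1 (ht (Set.mem_univ y))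
  exact (le_of_lt hy).trans (hc (Finset.le_sup (f := id) hnt) y)

variable {X : Type*} [TopologicalSpace X]

/-- The key fact: `f̃(x, y) = f(x)(y)` is LSC on `X × Y`. -/
lemma lsc_tilde [CompactSpace Y] [T2Space Y] {f : X → Lscb Y} (hf : MemLscbXY f) :
    LowerSemicontinuous fun p : X × Y => (f p.1).1 p.2 := by
  rintro ⟨x₀, y₀⟩ t ht
  set h := f x₀ with hh
  obtain ⟨m, hm, hmle⟩ := lscb_pos_lb h
  -- choose parameters
  set t'' : ℝ := max t 0 with ht''
  have ht''lt : t'' < h.1 y₀ := max_lt ht (h.2.2.1 y₀)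
  set t' : ℝ := (t'' + h.1 y₀) / 2 with ht'
  have h1 : t'' < t' := by rw [ht']; linarith
  have h2 : t' < h.1 y₀ := by rw [ht']; linarith
  set U : Set Y := h.1 ⁻¹' Set.Ioi t' with hU
  have hUo : IsOpen U := h.2.1.isOpen_preimage t'
  have hy₀U : y₀ ∈ U := h2
  set δ : ℝ := min m (t' - t'') / 2 with hδ
  have hδpos : 0 < δ := by
    have : 0 < min m (t' - t'') := lt_min hm (by linarith)
    positivity
  -- Urysohn function
  obtain ⟨φ, hφ0, hφ1, hφmem⟩ := exists_continuous_zero_one_of_isClosed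
    hUo.isClosed_compl isClosed_singleton
    (by simp [Set.disjoint_left]; intro a ha; simpa using fun hc => (hc ▸ ha) hy₀U)
  set g : Lscb Y := ⟨fun y => δ + t'' * φ y,
    by
      refine ⟨(Continuous.lowerSemicontinuous (by continuity)), fun y => ?_, ⟨δ + t'', fun y => ?_⟩⟩
      · have h0 : 0 ≤ t'' * φ y := mul_nonneg (le_max_right _ _) (hφmem y).1
        show 0 < δ + t'' * φ y
        linarith
      · have h0 : t'' * φ y ≤ t'' := by
          have := (hφmem y).2
          nlinarith [le_max_right t 0]
        show δ + t'' * φ y ≤ δ + t''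
        linarith⟩ with hg
  have hgc : Continuous g.1 := by
    simp only [hg]; continuity
  have hgap : ∀ y, g.1 y + δ ≤ h.1 y := by
    intro y
    by_cases hyU : y ∈ U
    · have hφle : t'' * φ y ≤ t'' := by
        have := (hφmem y).2; nlinarith [le_max_right t 0]
      have : t' < h.1 y := hyU
      have hδ2 : 2 * δ ≤ t' - t'' := by
        have := min_le_right m (t' - t''); rw [hδ]; linarith
      simp only [hg]
      linarith
    · have hφ0' : φ y = 0 := hφ0 hyU
      have hδ2 : 2 * δ ≤ m := by
        have := min_le_left m (t' - t''); rw [hδ]; linarith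
      have := hmle y
      simp only [hg, hφ0', mul_zero, add_zero]
      linarith
  have hcc : CompactlyContained g h := cc_of_gap hgc hδpos hgap
  -- the neighborhood
  have hV : IsOpen {x : X | CompactlyContained g (f x)} := hf.1 g
  have hx₀V : x₀ ∈ {x : X | CompactlyContained g (f x)} := hcc
  have hW : IsOpen {y : Y | t < g.1 y} := by
    have : {y : Y | t < g.1 y} = g.1 ⁻¹' Set.Ioi t := rfl
    rw [this]; exact hgc.lowerSemicontinuous.isOpen_preimage t
  have hy₀W : y₀ ∈ {y : Y | t < g.1 y} := by
    have hφy₀ : φ y₀ = 1 := hφ1 rfl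
    simp only [hg, Set.mem_setOf_eq, hφy₀, mul_one]
    have := le_max_left t 0
    linarith
  have hmem : {x : X | CompactlyContained g (f x)} ×ˢ {y : Y | t < g.1 y} ∈
      nhds (x₀, y₀) := (hV.prod hW).mem_nhds ⟨hx₀V, hy₀W⟩
  filter_upwards [hmem] with p hp
  exact lt_of_lt_of_le hp.2 (cc_le hp.1 p.2)

end Aux

theorem stmt16 (X Y : Type*) [TopologicalSpace X] [CompactSpace X] [T2Space X]
    [TopologicalSpace Y] [CompactSpace Y] [T2Space Y] :
    -- `β` is well defined
    (∀ f g f' g' : X → Lscb Y, MemLscbXY f → MemLscbXY g → MemLscbXY f' → MemLscbXY g' →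
      GrotRel f g f' g' → betaMap f g = betaMap f' g') ∧
    -- `β` takes values in `G_b(X, Y)`
    (∀ f g : X → Lscb Y, MemLscbXY f → MemLscbXY g → MemGb (betaMap f g)) ∧
    -- `β` is additive, i.e. a group homomorphism
    (∀ f g f' g' : X → Lscb Y, MemLscbXY f → MemLscbXY g → MemLscbXY f' → MemLscbXY g' →
      betaMap (f + f') (g + g') = betaMap f g + betaMap f' g') ∧
    -- `β` is injective
    (∀ f g f' g' : X → Lscb Y, MemLscbXY f → MemLscbXY g → MemLscbXY f' → MemLscbXY g' →
      betaMap f g = betaMap f' g' → GrotRel f g f' g') ∧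
    -- `β` is an order-embedding
    (∀ f g f' g' : X → Lscb Y, MemLscbXY f → MemLscbXY g → MemLscbXY f' → MemLscbXY g' →
      ((∃ e : X → Lscb Y, MemLscbXY e ∧ f + g' + e ≤ f' + g + e) ↔
        betaMap f g ≤ betaMap f' g')) := by
  refine ⟨?_, ?_, ?_, ?_, ?_⟩
  · -- well-definedness
    rintro f g f' g' _ _ _ _ ⟨e, _, heq⟩
    funext p
    have h1 : ((f + g' + e) p.1).1 p.2 = ((f' + g + e) p.1).1 p.2 := by rw [heq]
    simp only [Pi.add_apply, Lscb.add_val] at h1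
    simp only [betaMap]
    linarith
  · -- values in G_b
    intro f g hf hg
    refine ⟨fun p => (f p.1).1 p.2, fun p => (g p.1).1 p.2,
      ⟨lsc_tilde hf, fun p => (f p.1).2.2.1 p.2, hf.2.elim fun C hC => ⟨C, fun p => hC p.1 p.2⟩⟩,
      ⟨lsc_tilde hg, fun p => (g p.1).2.2.1 p.2, hg.2.elim fun C hC => ⟨C, fun p => hC p.1 p.2⟩⟩,
      rfl⟩
  · -- additivity
    intro f g f' g' _ _ _ _
    funext p
    simp only [betaMap, Pi.add_apply, Lscb.add_val]
    ring
  · -- injectivity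
    intro f g f' g' hf _ _ _ heq
    refine ⟨f, hf, ?_⟩
    funext x
    apply Subtype.ext
    funext y
    have h1 : betaMap f g (x, y) = betaMap f' g' (x, y) := by rw [heq]
    simp only [betaMap] at h1
    show ((f + g' + f) x).1 y = ((f' + g + f) x).1 y
    simp only [Pi.add_apply, Lscb.add_val]
    linarith
  · -- order embedding
    intro f g f' g' hf _ _ _
    constructor
    · rintro ⟨e, _, hle⟩ p
      have h1 := hle p.1 p.2
      simp only [Pi.add_apply, Lscb.add_val] at h1
      simp only [betaMap]
      linarith
    · intro hle
      refine ⟨f, hf, fun x y => ?_⟩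
      have h1 := hle (x, y)
      simp only [betaMap] at h1
      show ((f + g' + f) x).1 y ≤ ((f' + g + f) x).1 y
      simp only [Pi.add_apply, Lscb.add_val]
      linarith
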